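/- Under the projector hypotheses, the 4-tensor T = ρ[((n−2)(n−3)/2)(g⊙g) + (P⊙P) − (n−3)(g⊙P)] satisfies, for all indices μ, κ, the partial-trace identity (T·T)_{μν}{}^ν{}_κ = −ρ²[2(n−1)(n−2)(n−3)² g_{μκ} + 4(n−1)(n−3) P_{μκ}]. -/
import Mathlib


open Finset

variable {ι : Type*} [Fintype ι] [DecidableEq ι]

/-- Kulkarni–Nomizu product of two 2-tensors:
`(A⊙B)_{μνλκ} = A_{μλ}B_{νκ} − A_{νλ}B_{μκ} − A_{μκ}B_{νλ} + A_{νκ}B_{μλ}`. -/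
def KN (A B : ι → ι → ℝ) : ι → ι → ι → ι → ℝ :=
  fun μ ν l κ => A μ l * B ν κ - A ν l * B μ κ - A μ κ * B ν l + A ν κ * B μ l

/-- Contraction of two 2-tensors via the inverse metric:
`(A·B)_{μκ} = Σ_{ν,λ} A_{μν}(Ḡ⁻¹)_{νλ}B_{λκ}`. -/
def dot2 (Ginv : ι → ι → ℝ) (A B : ι → ι → ℝ) : ι → ι → ℝ :=
  fun μ κ => ∑ ν, ∑ l, A μ ν * Ginv ν l * B l κ

/-- Contraction of two 4-tensors via the inverse metric:
`(R·S)_{μνλκ} = Σ R_{μνστ}(Ḡ⁻¹)_{σσ'}(Ḡ⁻¹)_{ττ'}S_{σ'τ'λκ}`. -/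
def dot4 (Ginv : ι → ι → ℝ) (R S : ι → ι → ι → ι → ℝ) : ι → ι → ι → ι → ℝ :=
  fun μ ν l κ => ∑ σ, ∑ τ, ∑ σ', ∑ τ', R μ ν σ τ * Ginv σ σ' * Ginv τ τ' * S σ' τ' l κ

/-- Trace of a 2-tensor: `tr A = Σ_{μ,ν} (Ḡ⁻¹)_{μν}A_{νμ}`. -/
def tr2 (Ginv : ι → ι → ℝ) (A : ι → ι → ℝ) : ℝ :=
  ∑ μ, ∑ ν, Ginv μ ν * A ν μ

/-- Partial trace of a 4-tensor: `R_{μν}{}^ν{}_κ = Σ_{ν,ν'} (Ḡ⁻¹)_{νν'} R_{μνν'κ}`. -/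
def ptr4 (Ginv : ι → ι → ℝ) (R : ι → ι → ι → ι → ℝ) : ι → ι → ℝ :=
  fun μ κ => ∑ ν, ∑ ν', Ginv ν ν' * R μ ν ν' κ

/-- Full trace of a 4-tensor: `R_{μν}{}^{μν} = Σ (Ḡ⁻¹)_{μμ'}(Ḡ⁻¹)_{νν'} R_{μνμ'ν'}`. -/
def ftr4 (Ginv : ι → ι → ℝ) (R : ι → ι → ι → ι → ℝ) : ℝ :=
  ∑ μ, ∑ μ', ∑ ν, ∑ ν', Ginv μ μ' * Ginv ν ν' * R μ ν μ' ν'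

/-- The curvature 4-tensor of a generalized Schwarzschild–Tangherlini geometry,
`T = ρ[((n−2)(n−3)/2)(g⊙g) + (P⊙P) − (n−3)(g⊙P)]`. -/
noncomputable def Tgst (n : ℕ) (ρ : ℝ) (g P : ι → ι → ℝ) : ι → ι → ι → ι → ℝ :=
  fun μ ν l κ => ρ * (((n : ℝ) - 2) * ((n : ℝ) - 3) / 2 * KN g g μ ν l κ
    + KN P P μ ν l κ - ((n : ℝ) - 3) * KN g P μ ν l κ)

set_option linter.unusedSectionVars false in
private lemma sumL1 (G : ι → ι → ℝ) (hGs : ∀ μ ν, G μ ν = G ν μ) (f h : ι → ι → ℝ) (μ κ : ι) :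
    ∑ ν, ∑ ν', G ν ν' * (f μ ν' * h ν κ) = dot2 G f h μ κ := by
  simp only [dot2]
  rw [Finset.sum_comm]
  exact Finset.sum_congr rfl fun a _ => Finset.sum_congr rfl fun b _ => by rw [hGs b a]; ring

set_option linter.unusedSectionVars false in
private lemma sumL2 (G : ι → ι → ℝ) (hGs : ∀ μ ν, G μ ν = G ν μ) (f : ι → ι → ℝ) :
    ∑ ν, ∑ ν', G ν ν' * f ν ν' = tr2 G f := by
  simp only [tr2]
  rw [Finset.sum_comm]
  exact Finset.sum_congr rfl fun a _ => Finset.sum_congr rfl fun b _ => by rw [hGs b a]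

set_option linter.unusedSectionVars false in
private lemma quadFactor (G A B C D : ι → ι → ℝ) (μ ν l κ : ι) :
    ∑ σ : ι, ∑ τ : ι, ∑ σ' : ι, ∑ τ' : ι,
        A μ σ * B ν τ * G σ σ' * G τ τ' * (C σ' l * D τ' κ)
      = dot2 G A C μ l * dot2 G B D ν κ := by
  simp only [dot2]
  rw [Finset.sum_mul_sum]
  refine Finset.sum_congr rfl fun σ _ => Finset.sum_congr rfl fun τ _ => ?_
  rw [Finset.sum_mul_sum]
  exact Finset.sum_congr rfl fun σ' _ => Finset.sum_congr rfl fun τ' _ => by ring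

set_option linter.unusedSectionVars false in
private lemma dot4_KN (G A B C D : ι → ι → ℝ) (μ ν l κ : ι) :
    dot4 G (KN A B) (KN C D) μ ν l κ =
      2 * (dot2 G A C μ l * dot2 G B D ν κ + dot2 G A D μ l * dot2 G B C ν κ
        + dot2 G B D μ l * dot2 G A C ν κ + dot2 G B C μ l * dot2 G A D ν κ
        - dot2 G A D μ κ * dot2 G B C ν l - dot2 G A C μ κ * dot2 G B D ν l
        - dot2 G A C ν l * dot2 G B D μ κ - dot2 G A D ν l * dot2 G B C μ κ) := by
  have e : ∀ σ τ σ' τ' : ι, KN A B μ ν σ τ * G σ σ' * G τ τ' * KN C D σ' τ' l κ =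
      A μ σ * B ν τ * G σ σ' * G τ τ' * (C σ' l * D τ' κ)
    - A μ σ * B ν τ * G σ σ' * G τ τ' * (D σ' κ * C τ' l)
    - A μ σ * B ν τ * G σ σ' * G τ τ' * (C σ' κ * D τ' l)
    + A μ σ * B ν τ * G σ σ' * G τ τ' * (D σ' l * C τ' κ)
    - A ν σ * B μ τ * G σ σ' * G τ τ' * (C σ' l * D τ' κ)
    + A ν σ * B μ τ * G σ σ' * G τ τ' * (D σ' κ * C τ' l)
    + A ν σ * B μ τ * G σ σ' * G τ τ' * (C σ' κ * D τ' l)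
    - A ν σ * B μ τ * G σ σ' * G τ τ' * (D σ' l * C τ' κ)
    - B ν σ * A μ τ * G σ σ' * G τ τ' * (C σ' l * D τ' κ)
    + B ν σ * A μ τ * G σ σ' * G τ τ' * (D σ' κ * C τ' l)
    + B ν σ * A μ τ * G σ σ' * G τ τ' * (C σ' κ * D τ' l)
    - B ν σ * A μ τ * G σ σ' * G τ τ' * (D σ' l * C τ' κ)
    + B μ σ * A ν τ * G σ σ' * G τ τ' * (C σ' l * D τ' κ)
    - B μ σ * A ν τ * G σ σ' * G τ τ' * (D σ' κ * C τ' l)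
    - B μ σ * A ν τ * G σ σ' * G τ τ' * (C σ' κ * D τ' l)
    + B μ σ * A ν τ * G σ σ' * G τ τ' * (D σ' l * C τ' κ) := by
    intro σ τ σ' τ'; simp only [KN]; ring
  simp only [dot4, e, Finset.sum_add_distrib, Finset.sum_sub_distrib]
  rw [quadFactor G A B C D μ ν l κ, quadFactor G A B D C μ ν κ l,
      quadFactor G A B C D μ ν κ l, quadFactor G A B D C μ ν l κ,
      quadFactor G A B C D ν μ l κ, quadFactor G A B D C ν μ κ l,
      quadFactor G A B C D ν μ κ l, quadFactor G A B D C ν μ l κ,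
      quadFactor G B A C D ν μ l κ, quadFactor G B A D C ν μ κ l,
      quadFactor G B A C D ν μ κ l, quadFactor G B A D C ν μ l κ,
      quadFactor G B A C D μ ν l κ, quadFactor G B A D C μ ν κ l,
      quadFactor G B A C D μ ν κ l, quadFactor G B A D C μ ν l κ]
  ring

set_option linter.unusedSectionVars false in
private lemma ptrF (G : ι → ι → ℝ) (hGs : ∀ μ ν, G μ ν = G ν μ) (A B C D : ι → ι → ℝ)
    (μ κ : ι) :
    ∑ ν : ι, ∑ ν' : ι, G ν ν' * dot4 G (KN A B) (KN C D) μ ν ν' κ =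
      2 * (dot2 G (dot2 G A C) (dot2 G B D) μ κ + dot2 G (dot2 G A D) (dot2 G B C) μ κ
        + dot2 G (dot2 G B D) (dot2 G A C) μ κ + dot2 G (dot2 G B C) (dot2 G A D) μ κ
        - tr2 G (dot2 G B C) * dot2 G A D μ κ - tr2 G (dot2 G B D) * dot2 G A C μ κ
        - tr2 G (dot2 G A C) * dot2 G B D μ κ - tr2 G (dot2 G A D) * dot2 G B C μ κ) := by
  have e : ∀ ν ν' : ι, G ν ν' * dot4 G (KN A B) (KN C D) μ ν ν' κ =
      2 * (G ν ν' * (dot2 G A C μ ν' * dot2 G B D ν κ)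
        + G ν ν' * (dot2 G A D μ ν' * dot2 G B C ν κ)
        + G ν ν' * (dot2 G B D μ ν' * dot2 G A C ν κ)
        + G ν ν' * (dot2 G B C μ ν' * dot2 G A D ν κ)
        - G ν ν' * dot2 G B C ν ν' * dot2 G A D μ κ
        - G ν ν' * dot2 G B D ν ν' * dot2 G A C μ κ
        - G ν ν' * dot2 G A C ν ν' * dot2 G B D μ κ
        - G ν ν' * dot2 G A D ν ν' * dot2 G B C μ κ) := by
    intro ν ν'; rw [dot4_KN]; ring
  simp only [e]
  simp only [Finset.sum_add_distrib, Finset.sum_sub_distrib, ← Finset.mul_sum, ← Finset.sum_mul]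
  rw [sumL1 G hGs (dot2 G A C) (dot2 G B D) μ κ, sumL1 G hGs (dot2 G A D) (dot2 G B C) μ κ,
      sumL1 G hGs (dot2 G B D) (dot2 G A C) μ κ, sumL1 G hGs (dot2 G B C) (dot2 G A D) μ κ,
      sumL2 G hGs (dot2 G B C), sumL2 G hGs (dot2 G B D),
      sumL2 G hGs (dot2 G A C), sumL2 G hGs (dot2 G A D)]

set_option linter.unusedSectionVars false in
private lemma bigStep (G : ι → ι → ℝ) (g P : ι → ι → ℝ) (c1 c2 c3 : ℝ)
    (T : ι → ι → ι → ι → ℝ)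
    (hT : ∀ μ ν l κ, T μ ν l κ =
      c1 * KN g g μ ν l κ + c2 * KN P P μ ν l κ + c3 * KN g P μ ν l κ) (μ κ : ι) :
    ∑ ν : ι, ∑ ν' : ι, G ν ν' * dot4 G T T μ ν ν' κ =
      c1 * c1 * (∑ ν : ι, ∑ ν' : ι, G ν ν' * dot4 G (KN g g) (KN g g) μ ν ν' κ)
      + c1 * c2 * (∑ ν : ι, ∑ ν' : ι, G ν ν' * dot4 G (KN g g) (KN P P) μ ν ν' κ)
      + c1 * c3 * (∑ ν : ι, ∑ ν' : ι, G ν ν' * dot4 G (KN g g) (KN g P) μ ν ν' κ)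
      + c2 * c1 * (∑ ν : ι, ∑ ν' : ι, G ν ν' * dot4 G (KN P P) (KN g g) μ ν ν' κ)
      + c2 * c2 * (∑ ν : ι, ∑ ν' : ι, G ν ν' * dot4 G (KN P P) (KN P P) μ ν ν' κ)
      + c2 * c3 * (∑ ν : ι, ∑ ν' : ι, G ν ν' * dot4 G (KN P P) (KN g P) μ ν ν' κ)
      + c3 * c1 * (∑ ν : ι, ∑ ν' : ι, G ν ν' * dot4 G (KN g P) (KN g g) μ ν ν' κ)
      + c3 * c2 * (∑ ν : ι, ∑ ν' : ι, G ν ν' * dot4 G (KN g P) (KN P P) μ ν ν' κ)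
      + c3 * c3 * (∑ ν : ι, ∑ ν' : ι, G ν ν' * dot4 G (KN g P) (KN g P) μ ν ν' κ) := by
  have hD : ∀ μ ν l κ : ι, dot4 G T T μ ν l κ =
      c1 * c1 * dot4 G (KN g g) (KN g g) μ ν l κ
      + c1 * c2 * dot4 G (KN g g) (KN P P) μ ν l κ
      + c1 * c3 * dot4 G (KN g g) (KN g P) μ ν l κ
      + c2 * c1 * dot4 G (KN P P) (KN g g) μ ν l κ
      + c2 * c2 * dot4 G (KN P P) (KN P P) μ ν l κ
      + c2 * c3 * dot4 G (KN P P) (KN g P) μ ν l κ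
      + c3 * c1 * dot4 G (KN g P) (KN g g) μ ν l κ
      + c3 * c2 * dot4 G (KN g P) (KN P P) μ ν l κ
      + c3 * c3 * dot4 G (KN g P) (KN g P) μ ν l κ := by
    intro μ ν l κ
    have e : ∀ σ τ σ' τ' : ι, T μ ν σ τ * G σ σ' * G τ τ' * T σ' τ' l κ =
        c1 * c1 * (KN g g μ ν σ τ * G σ σ' * G τ τ' * KN g g σ' τ' l κ)
        + c1 * c2 * (KN g g μ ν σ τ * G σ σ' * G τ τ' * KN P P σ' τ' l κ)
        + c1 * c3 * (KN g g μ ν σ τ * G σ σ' * G τ τ' * KN g P σ' τ' l κ)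
        + c2 * c1 * (KN P P μ ν σ τ * G σ σ' * G τ τ' * KN g g σ' τ' l κ)
        + c2 * c2 * (KN P P μ ν σ τ * G σ σ' * G τ τ' * KN P P σ' τ' l κ)
        + c2 * c3 * (KN P P μ ν σ τ * G σ σ' * G τ τ' * KN g P σ' τ' l κ)
        + c3 * c1 * (KN g P μ ν σ τ * G σ σ' * G τ τ' * KN g g σ' τ' l κ)
        + c3 * c2 * (KN g P μ ν σ τ * G σ σ' * G τ τ' * KN P P σ' τ' l κ)
        + c3 * c3 * (KN g P μ ν σ τ * G σ σ' * G τ τ' * KN g P σ' τ' l κ) := by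
      intro σ τ σ' τ'; rw [hT μ ν σ τ, hT σ' τ' l κ]; ring
    simp only [dot4, e, Finset.sum_add_distrib, ← Finset.mul_sum]
  have e2 : ∀ ν ν' : ι, G ν ν' * dot4 G T T μ ν ν' κ =
      c1 * c1 * (G ν ν' * dot4 G (KN g g) (KN g g) μ ν ν' κ)
      + c1 * c2 * (G ν ν' * dot4 G (KN g g) (KN P P) μ ν ν' κ)
      + c1 * c3 * (G ν ν' * dot4 G (KN g g) (KN g P) μ ν ν' κ)
      + c2 * c1 * (G ν ν' * dot4 G (KN P P) (KN g g) μ ν ν' κ)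
      + c2 * c2 * (G ν ν' * dot4 G (KN P P) (KN P P) μ ν ν' κ)
      + c2 * c3 * (G ν ν' * dot4 G (KN P P) (KN g P) μ ν ν' κ)
      + c3 * c1 * (G ν ν' * dot4 G (KN g P) (KN g g) μ ν ν' κ)
      + c3 * c2 * (G ν ν' * dot4 G (KN g P) (KN P P) μ ν ν' κ)
      + c3 * c3 * (G ν ν' * dot4 G (KN g P) (KN g P) μ ν ν' κ) := by
    intro ν ν'; rw [hD]; ring
  simp only [e2, Finset.sum_add_distrib, ← Finset.mul_sum]

open Matrix in
set_option linter.unusedSectionVars false in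
private lemma ginv_symm (Gbar Ginv : ι → ι → ℝ)
    (hGsymm : ∀ μ ν, Gbar μ ν = Gbar ν μ)
    (hGinv : ∀ μ l, ∑ ν, Gbar μ ν * Ginv ν l = if μ = l then (1 : ℝ) else 0) :
    ∀ μ ν, Ginv μ ν = Ginv ν μ := by
  have hMN : (Matrix.of Gbar) * (Matrix.of Ginv) = 1 := by
    ext μ l
    simpa [Matrix.mul_apply, Matrix.one_apply] using hGinv μ l
  have hMT : (Matrix.of Gbar)ᵀ = Matrix.of Gbar := by
    ext a b
    simpa [Matrix.transpose_apply] using hGsymm b a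
  have h1 : (Matrix.of Ginv)ᵀ * (Matrix.of Gbar) = 1 := by
    calc (Matrix.of Ginv)ᵀ * (Matrix.of Gbar)
        = (Matrix.of Ginv)ᵀ * (Matrix.of Gbar)ᵀ := by rw [hMT]
      _ = ((Matrix.of Gbar) * (Matrix.of Ginv))ᵀ := by rw [Matrix.transpose_mul]
      _ = 1 := by rw [hMN, Matrix.transpose_one]
  have key : (Matrix.of Ginv)ᵀ = Matrix.of Ginv := by
    calc (Matrix.of Ginv)ᵀ
        = (Matrix.of Ginv)ᵀ * ((Matrix.of Gbar) * (Matrix.of Ginv)) := by rw [hMN, mul_one]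
      _ = ((Matrix.of Ginv)ᵀ * (Matrix.of Gbar)) * (Matrix.of Ginv) := by rw [mul_assoc]
      _ = Matrix.of Ginv := by rw [h1, one_mul]
  intro μ ν
  have h2 := congrFun (congrFun key ν) μ
  simpa [Matrix.transpose_apply] using h2

/-- Under the projector hypotheses,
`(T·T)_{μν}{}^ν{}_κ = −ρ²[2(n−1)(n−2)(n−3)² g_{μκ} + 4(n−1)(n−3) P_{μκ}]`. -/
theorem Tgst_dot_Tgst_partial_trace {n : ℕ} (hn : 4 ≤ n) (hcard : Fintype.card ι = n)
    (Gbar Ginv g P : ι → ι → ℝ) (ρ : ℝ)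
    (hGsymm : ∀ μ ν, Gbar μ ν = Gbar ν μ)
    (hGinv : ∀ μ l, ∑ ν, Gbar μ ν * Ginv ν l = if μ = l then (1 : ℝ) else 0)
    (hsplit : ∀ μ ν, Gbar μ ν = g μ ν + P μ ν)
    (hgsymm : ∀ μ ν, g μ ν = g ν μ) (hPsymm : ∀ μ ν, P μ ν = P ν μ)
    (hgg : ∀ μ ν, dot2 Ginv g g μ ν = g μ ν)
    (hPP : ∀ μ ν, dot2 Ginv P P μ ν = P μ ν)
    (hgP : ∀ μ ν, dot2 Ginv g P μ ν = 0)
    (htrg : tr2 Ginv g = 2)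
    (htrP : tr2 Ginv P = (n : ℝ) - 2)
    :
    ∀ μ κ,
      ptr4 Ginv (dot4 Ginv (Tgst n ρ g P) (Tgst n ρ g P)) μ κ =
        -(ρ ^ 2) * (2 * ((n : ℝ) - 1) * ((n : ℝ) - 2) * ((n : ℝ) - 3) ^ 2 * g μ κ
          + 4 * ((n : ℝ) - 1) * ((n : ℝ) - 3) * P μ κ) := by
  have hGis : ∀ μ ν, Ginv μ ν = Ginv ν μ := ginv_symm Gbar Ginv hGsymm hGinv
  have hPg : ∀ μ ν, dot2 Ginv P g μ ν = 0 := by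
    intro μ ν
    rw [← hgP ν μ]
    simp only [dot2]
    rw [Finset.sum_comm]
    exact Finset.sum_congr rfl fun x _ => Finset.sum_congr rfl fun y _ => by
      rw [hGis y x, hPsymm μ y, hgsymm x ν]; ring
  have hT : ∀ μ ν l κ, Tgst n ρ g P μ ν l κ =
      (ρ * (((n : ℝ) - 2) * ((n : ℝ) - 3) / 2)) * KN g g μ ν l κ
      + ρ * KN P P μ ν l κ + (-(ρ * ((n : ℝ) - 3))) * KN g P μ ν l κ := by
    intro μ ν l κ; simp only [Tgst]; ring
  intro μ κ
  show ∑ ν : ι, ∑ ν' : ι, Ginv ν ν' * dot4 Ginv (Tgst n ρ g P) (Tgst n ρ g P) μ ν ν' κ = _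
  rw [bigStep Ginv g P _ _ _ (Tgst n ρ g P) hT μ κ,
      ptrF Ginv hGis g g g g μ κ, ptrF Ginv hGis g g P P μ κ, ptrF Ginv hGis g g g P μ κ,
      ptrF Ginv hGis P P g g μ κ, ptrF Ginv hGis P P P P μ κ, ptrF Ginv hGis P P g P μ κ,
      ptrF Ginv hGis g P g g μ κ, ptrF Ginv hGis g P P P μ κ, ptrF Ginv hGis g P g P μ κ]
  have hgg' : ∀ μ ν, (∑ a, ∑ b, g μ a * Ginv a b * g b ν) = g μ ν := hgg
  have hPP' : ∀ μ ν, (∑ a, ∑ b, P μ a * Ginv a b * P b ν) = P μ ν := hPP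
  have hgP' : ∀ μ ν, (∑ a, ∑ b, g μ a * Ginv a b * P b ν) = 0 := hgP
  have hPg' : ∀ μ ν, (∑ a, ∑ b, P μ a * Ginv a b * g b ν) = 0 := hPg
  have htrg' : (∑ a, ∑ b, Ginv a b * g b a) = 2 := htrg
  have htrP' : (∑ a, ∑ b, Ginv a b * P b a) = (n : ℝ) - 2 := htrP
  simp only [dot2, tr2, hgg', hPP', hgP', hPg', mul_zero, zero_mul,
    Finset.sum_const_zero, htrg', htrP']
  ring
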